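/- Let n ≥ 1, let (f_0, …, f_n) be a continuous T-system of order n on the interval [a,b] with a < b, and let f be a nonzero element of the linear span of f_0, …, f_n. If f has k pairwise distinct non-nodal zeros and l pairwise distinct nodal zeros in [a,b] (all k + l zeros pairwise distinct), then 2k + l ≤ n. -/

import Mathlib

/-- A family `f 0, …, f (k-1)` of real-valued functions on `X` is a T-system of
order `n` on the set `S ⊆ X` if every nontrivial linear combination has at most
`n` zeros in `S`. -/
def IsTSystemOn {X : Type*} {k : ℕ} (n : ℕ) (f : Fin k → X → ℝ) (S : Set X) : Prop :=
  ∀ a : Fin k → ℝ, a ≠ 0 → {x ∈ S | ∑ i, a i * f i x = 0}.encard ≤ (n : ℕ∞)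

/-- `x₀` is a non-nodal zero of `f` on `[a,b]`: it lies in the open interval
`(a,b)`, `f x₀ = 0`, and `f` does not change sign at `x₀`. -/
def IsNonNodalZero (f : ℝ → ℝ) (a b x₀ : ℝ) : Prop :=
  x₀ ∈ Set.Ioo a b ∧ f x₀ = 0 ∧
    ((∀ᶠ y in nhds x₀, 0 ≤ f y) ∨ (∀ᶠ y in nhds x₀, f y ≤ 0))

/-- `x₀` is a nodal zero of `f` on `[a,b]`: it is a zero in `[a,b]` which is
either an endpoint or a sign change of `f`. -/
def IsNodalZero (f : ℝ → ℝ) (a b x₀ : ℝ) : Prop :=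
  x₀ ∈ Set.Icc a b ∧ f x₀ = 0 ∧ ¬ IsNonNodalZero f a b x₀

/- ### Auxiliary lemmas -/

/-- Counting: an injective map from a fintype into a set of `encard ≤ n`. -/
lemma aux_card_le_of_inj {X : Type*} {α : Type*} [Fintype α] {Z : Set X} {n : ℕ}
    (w : α → X) (hw : Function.Injective w) (hrange : ∀ i, w i ∈ Z)
    (hZ : Z.encard ≤ (n : ℕ∞)) : Fintype.card α ≤ n := by
  have h1 : (Set.range w).encard ≤ (n : ℕ∞) :=
    le_trans (Set.encard_le_encard (Set.range_subset_iff.mpr hrange)) hZ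
  rw [← Set.image_univ, hw.encard_image, Set.encard_univ,
    ENat.card_eq_coe_fintype_card] at h1
  exact_mod_cast h1

/-- Separation of an injective finite family of reals. -/
lemma aux_sep {k : ℕ} (x : Fin k → ℝ) (hx : Function.Injective x) :
    ∃ ρ > (0 : ℝ), ∀ i i', i ≠ i' → 2 * ρ ≤ |x i - x i'| := by
  classical
  by_cases h : (Finset.univ.offDiag (α := Fin k)).Nonempty
  · have hSne : (Finset.image (fun p : Fin k × Fin k => |x p.1 - x p.2|)
        Finset.univ.offDiag).Nonempty := h.image _
    obtain ⟨p, hp, hpe⟩ := Finset.mem_image.mp (Finset.min'_mem _ hSne)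
    have hpe' : |x p.1 - x p.2| = Finset.min' _ hSne := hpe
    rw [Finset.mem_offDiag] at hp
    have hmpos : 0 < Finset.min' _ hSne := by
      have h0 : 0 < |x p.1 - x p.2| :=
        abs_pos.mpr (sub_ne_zero.mpr fun he => hp.2.2 (hx he))
      linarith
    refine ⟨Finset.min' _ hSne / 2, by linarith, fun i i' hne => ?_⟩
    have hmem2 : |x i - x i'| ∈ Finset.image (fun p : Fin k × Fin k => |x p.1 - x p.2|)
        Finset.univ.offDiag :=
      Finset.mem_image.mpr ⟨(i, i'),
        Finset.mem_offDiag.mpr ⟨Finset.mem_univ _, Finset.mem_univ _, hne⟩, rfl⟩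
    have := Finset.min'_le _ _ hmem2
    linarith
  · refine ⟨1, one_pos, fun i i' hne => absurd ?_ h⟩
    exact ⟨(i, i'), Finset.mem_offDiag.mpr ⟨Finset.mem_univ _, Finset.mem_univ _, hne⟩⟩

/-- Extend an injective family of points of an infinite set to a larger injective family. -/
lemma aux_extend {m N : ℕ} (hmN : m ≤ N) {S : Set ℝ} (hS : S.Infinite)
    (z : Fin m → ℝ) (hz : Function.Injective z) (hzS : ∀ j, z j ∈ S) :
    ∃ P : Fin N → ℝ, Function.Injective P ∧ (∀ i, P i ∈ S) ∧
      ∀ j : Fin m, P (Fin.castLE hmN j) = z j := by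
  classical
  have hS' : (S \ Set.range z).Infinite := hS.diff (Set.finite_range z)
  set e := hS'.natEmbedding with he
  refine ⟨fun i => if h : (i : ℕ) < m then z ⟨i, h⟩ else (e ((i : ℕ) - m) : ℝ), ?_, ?_, ?_⟩
  · intro i i' hii
    dsimp only at hii
    by_cases h1 : (i : ℕ) < m <;> by_cases h2 : (i' : ℕ) < m
    · rw [dif_pos h1, dif_pos h2] at hii
      have := hz hii
      exact Fin.ext (by simpa using congrArg Fin.val this)
    · rw [dif_pos h1, dif_neg h2] at hii
      exact absurd (hii ▸ Set.mem_range_self _) (e ((i' : ℕ) - m)).2.2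
    · rw [dif_neg h1, dif_pos h2] at hii
      exact absurd (hii.symm ▸ Set.mem_range_self _) (e ((i : ℕ) - m)).2.2
    · rw [dif_neg h1, dif_neg h2] at hii
      have := e.injective (Subtype.coe_injective hii)
      exact Fin.ext (by omega)
  · intro i
    dsimp only
    by_cases h1 : (i : ℕ) < m
    · rw [dif_pos h1]; exact hzS _
    · rw [dif_neg h1]; exact (e ((i : ℕ) - m)).2.1
  · intro j
    have hj : ((Fin.castLE hmN j : Fin N) : ℕ) < m := j.2
    dsimp only
    rw [dif_pos hj]
    exact congrArg z (Fin.ext rfl)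

/-- Interpolation: values of span elements can be prescribed at `n+1` points. -/
lemma aux_interp (n : ℕ) (a b : ℝ) (F : Fin (n + 1) → ℝ → ℝ)
    (hT : IsTSystemOn n F (Set.Icc a b))
    (P : Fin (n + 1) → ℝ) (hPinj : Function.Injective P) (hPS : ∀ i, P i ∈ Set.Icc a b)
    (v : Fin (n + 1) → ℝ) : ∃ d : Fin (n + 1) → ℝ, ∀ i, ∑ j, d j * F j (P i) = v i := by
  classical
  let L : (Fin (n + 1) → ℝ) →ₗ[ℝ] (Fin (n + 1) → ℝ) :=
    { toFun := fun d => fun i => ∑ j, d j * F j (P i)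
      map_add' := by
        intro p q; funext i
        simp [add_mul, Finset.sum_add_distrib]
      map_smul' := by
        intro r p; funext i
        simp [Finset.mul_sum, mul_assoc] }
  have hinj : Function.Injective L := by
    rw [← LinearMap.ker_eq_bot, LinearMap.ker_eq_bot']
    intro d hd0
    by_contra hdne
    have hd0' : ∀ i, ∑ j, d j * F j (P i) = 0 := fun i => congrFun hd0 i
    have hsub : Set.range P ⊆ {t ∈ Set.Icc a b | ∑ j, d j * F j t = 0} := by
      rintro _ ⟨i, rfl⟩
      exact ⟨hPS i, hd0' i⟩
    have hcard : ((n + 1 : ℕ) : ℕ∞) ≤ (n : ℕ∞) := by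
      calc ((n + 1 : ℕ) : ℕ∞) = (Set.range P).encard := by
            rw [← Set.image_univ, hPinj.encard_image, Set.encard_univ,
              ENat.card_eq_coe_fintype_card, Fintype.card_fin]
        _ ≤ _ := le_trans (Set.encard_le_encard hsub) (hT d hdne)
    exact absurd (Nat.cast_le.mp hcard) (by omega)
  obtain ⟨d, hd⟩ := (LinearMap.injective_iff_surjective.mp hinj) v
  exact ⟨d, fun i => congrFun hd i⟩

/-- if a nonzero element of the span of a continuous T-system of order
`n` on `[a,b]` has `k` pairwise distinct non-nodal zeros and `l` pairwise distinct
nodal zeros (all `k + l` zeros pairwise distinct), then `2k + l ≤ n`. -/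
theorem tsystem_nodal_nonnodal_zero_bound (n : ℕ) (hn : 1 ≤ n) (a b : ℝ) (hab : a < b)
    (F : Fin (n + 1) → ℝ → ℝ) (hF : ∀ i, ContinuousOn (F i) (Set.Icc a b))
    (hT : IsTSystemOn n F (Set.Icc a b))
    (c : Fin (n + 1) → ℝ) (hc : c ≠ 0)
    (k l : ℕ) (x : Fin k → ℝ) (y : Fin l → ℝ)
    (hdist : Function.Injective (Sum.elim x y))
    (hx : ∀ i, IsNonNodalZero (fun t => ∑ j, c j * F j t) a b (x i))
    (hy : ∀ i, IsNodalZero (fun t => ∑ j, c j * F j t) a b (y i)) :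
    2 * k + l ≤ n := by
  classical
  set f : ℝ → ℝ := fun t => ∑ j, c j * F j t with hfdef
  by_contra hcon
  push_neg at hcon
  have hZle := hT c hc
  set Z := {t ∈ Set.Icc a b | f t = 0} with hZdef
  have hZfin : Z.Finite := Set.finite_of_encard_le_coe hZle
  have hxZ : ∀ i, x i ∈ Z := fun i => ⟨Set.mem_Icc_of_Ioo (hx i).1, (hx i).2.1⟩
  have hyZ : ∀ j, y j ∈ Z := fun j => ⟨(hy j).1, (hy j).2.1⟩
  have hkl : k + l ≤ n := by
    have := aux_card_le_of_inj (Sum.elim x y) hdist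
      (by rintro (i | j); exacts [hxZ i, hyZ j]) hZle
    simpa using this
  have hk : 1 ≤ k := by omega
  have hfc : ContinuousOn f (Set.Icc a b) :=
    continuousOn_finset_sum _ fun j _ => continuousOn_const.mul (hF j)
  have hxinj : Function.Injective x := fun i i' h => by
    have : (Sum.inl i : Fin k ⊕ Fin l) = Sum.inl i' := hdist (by simpa using h)
    simpa using this
  have hxyne : ∀ i j, x i ≠ y j := fun i j he => by
    have : (Sum.inl i : Fin k ⊕ Fin l) = Sum.inr j := hdist (by simpa using he)
    simp at this
  obtain ⟨ρ, hρ, hsep⟩ := aux_sep x hxinj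
  set s : Fin k → ℝ := fun i => if (∀ᶠ t in nhds (x i), 0 ≤ f t) then 1 else -1 with hsdef
  have hs1 : ∀ i, s i = 1 ∨ s i = -1 := fun i => by
    by_cases hp : (∀ᶠ t in nhds (x i), 0 ≤ f t) <;> simp [hsdef, hp]
  -- choose δ i
  have hδex : ∀ i : Fin k, ∃ δ > (0 : ℝ), δ ≤ ρ ∧
      (∀ t, |t - x i| ≤ δ → t ∈ Set.Icc a b) ∧
      (∀ t, |t - x i| ≤ δ → t ∈ Z → t = x i) ∧
      (∀ t, |t - x i| ≤ δ → 0 ≤ s i * f t) := by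
    intro i
    have hsgn : ∀ᶠ t in nhds (x i), 0 ≤ s i * f t := by
      by_cases hp : (∀ᶠ t in nhds (x i), 0 ≤ f t)
      · filter_upwards [hp] with t ht
        simp only [hsdef, if_pos hp]
        linarith
      · have hneg := ((hx i).2.2).resolve_left hp
        filter_upwards [hneg] with t ht
        simp only [hsdef, if_neg hp]
        nlinarith
    have hZ' : ∀ᶠ t in nhds (x i), t ∈ Z → t = x i := by
      have hcl : IsClosed (Z \ {x i}) := hZfin.diff.isClosed
      have hxn : x i ∈ (Z \ {x i})ᶜ := by simp
      filter_upwards [hcl.isOpen_compl.mem_nhds hxn] with t ht htZ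
      by_contra hne
      exact ht ⟨htZ, hne⟩
    have hIoo : ∀ᶠ t in nhds (x i), t ∈ Set.Ioo a b :=
      isOpen_Ioo.eventually_mem (hx i).1
    obtain ⟨δ₀, hδ₀, hball⟩ :=
      Metric.eventually_nhds_iff.mp ((hsgn.and hZ').and hIoo)
    have hkey : ∀ t : ℝ, |t - x i| ≤ min (δ₀ / 2) ρ → dist t (x i) < δ₀ := by
      intro t ht
      rw [Real.dist_eq]
      have := min_le_left (δ₀ / 2) ρ
      linarith
    refine ⟨min (δ₀ / 2) ρ, by positivity, min_le_right _ _, ?_, ?_, ?_⟩ <;> intro t ht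
    · exact Set.mem_Icc_of_Ioo (hball (hkey t ht)).2
    · exact (hball (hkey t ht)).1.2
    · exact (hball (hkey t ht)).1.1
  choose δ hδpos hδρ hδIcc hδZ hδsgn using hδex
  -- build interpolating g
  have hkl1 : k + l ≤ n + 1 := by omega
  set z : Fin (k + l) → ℝ := Sum.elim x y ∘ finSumFinEquiv.symm with hzdef
  have hzinj : Function.Injective z := hdist.comp finSumFinEquiv.symm.injective
  have hzS : ∀ j, z j ∈ Set.Icc a b := by
    intro j
    rcases hj : finSumFinEquiv.symm j with i | i
    · simpa [hzdef, hj] using (hxZ i).1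
    · simpa [hzdef, hj] using (hyZ i).1
  obtain ⟨P, hPinj, hPS, hPz⟩ := aux_extend hkl1 (Set.Icc_infinite hab) z hzinj hzS
  set v : Fin (n + 1) → ℝ := fun i =>
    if h : (i : ℕ) < k + l then Sum.elim s 0 (finSumFinEquiv.symm ⟨(i : ℕ), h⟩) else 0
    with hvdef
  obtain ⟨d, hd⟩ := aux_interp n a b F hT P hPinj hPS v
  set g : ℝ → ℝ := fun t => ∑ j, d j * F j t with hgdef
  have hval : ∀ j : Fin (k + l), g (z j) = Sum.elim s 0 (finSumFinEquiv.symm j) := by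
    intro j
    have h1 := hd (Fin.castLE hkl1 j)
    rw [hPz j] at h1
    have h2 : ((Fin.castLE hkl1 j : Fin (n + 1)) : ℕ) < k + l := j.2
    have h3 : (⟨((Fin.castLE hkl1 j : Fin (n + 1)) : ℕ), h2⟩ : Fin (k + l)) = j :=
      Fin.ext rfl
    have h4 : g (z j) = v (Fin.castLE hkl1 j) := h1
    rw [h4]
    simp only [hvdef]
    rw [dif_pos h2, h3]
  have hgx : ∀ i : Fin k, g (x i) = s i := by
    intro i
    have := hval (finSumFinEquiv (Sum.inl i))
    simpa [hzdef] using this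
  have hgy : ∀ j : Fin l, g (y j) = 0 := by
    intro j
    have := hval (finSumFinEquiv (Sum.inr j))
    simpa [hzdef] using this
  have hgc : ContinuousOn g (Set.Icc a b) :=
    continuousOn_finset_sum _ fun j _ => continuousOn_const.mul (hF j)
  -- signs of f at the endpoints of the little intervals
  have habsm : ∀ i : Fin k, |x i - δ i - x i| ≤ δ i := by
    intro i
    rw [show x i - δ i - x i = -δ i by ring, abs_neg, abs_of_pos (hδpos i)]
  have habsp : ∀ i : Fin k, |x i + δ i - x i| ≤ δ i := by
    intro i
    rw [show x i + δ i - x i = δ i by ring, abs_of_pos (hδpos i)]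
  have hfp : ∀ i : Fin k, 0 < s i * f (x i - δ i) := by
    intro i
    rcases lt_or_eq_of_le (hδsgn i _ (habsm i)) with h | h
    · exact h
    · exfalso
      have hfz : f (x i - δ i) = 0 := by
        rcases hs1 i with hs | hs <;> rw [hs] at h <;> linarith
      have := hδZ i _ (habsm i) ⟨hδIcc i _ (habsm i), hfz⟩
      linarith [hδpos i]
  have hfq : ∀ i : Fin k, 0 < s i * f (x i + δ i) := by
    intro i
    rcases lt_or_eq_of_le (hδsgn i _ (habsp i)) with h | h
    · exact h
    · exfalso
      have hfz : f (x i + δ i) = 0 := by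
        rcases hs1 i with hs | hs <;> rw [hs] at h <;> linarith
      have := hδZ i _ (habsp i) ⟨hδIcc i _ (habsp i), hfz⟩
      linarith [hδpos i]
  -- choose ε
  haveI : Nonempty (Fin k) := ⟨⟨0, hk⟩⟩
  set E : Fin k → ℝ := fun i =>
    min (s i * f (x i - δ i) / (|g (x i - δ i)| + 1))
        (s i * f (x i + δ i) / (|g (x i + δ i)| + 1)) with hEdef
  have hEpos : ∀ i, 0 < E i := by
    intro i
    apply lt_min <;> apply div_pos
    exacts [hfp i, by positivity, hfq i, by positivity]
  set ε : ℝ := Finset.univ.inf' Finset.univ_nonempty E with hεdef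
  have hεpos : 0 < ε := (Finset.lt_inf'_iff _).mpr fun i _ => hEpos i
  have hεle : ∀ i, ε ≤ E i := fun i => Finset.inf'_le _ (Finset.mem_univ i)
  set h : ℝ → ℝ := fun t => f t - ε * g t with hhdef
  have hhc : ContinuousOn h (Set.Icc a b) := hfc.sub (continuousOn_const.mul hgc)
  have hhx : ∀ i : Fin k, s i * h (x i) = -ε := by
    intro i
    have h0 : h (x i) = -(ε * s i) := by
      show f (x i) - ε * g (x i) = -(ε * s i)
      rw [(hx i).2.1, hgx i]
      ring
    rw [h0]
    rcases hs1 i with hs | hs <;> rw [hs] <;> ring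
  have hkey : ∀ (i : Fin k) (t : ℝ), ε ≤ s i * f t / (|g t| + 1) → 0 < s i * h t := by
    intro i t hεt
    have hgb : (0 : ℝ) < |g t| + 1 := by positivity
    have h1 : ε * (|g t| + 1) ≤ s i * f t := (le_div_iff₀ hgb).mp hεt
    have h2 : s i * g t ≤ |g t| := by
      rcases hs1 i with hs | hs <;> rw [hs]
      · rw [one_mul]; exact le_abs_self _
      · rw [neg_one_mul]; exact neg_le_abs _
    have h3 : ε * (s i * g t) ≤ ε * |g t| := by nlinarith
    have h4 : s i * h t = s i * f t - ε * (s i * g t) := by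
      show s i * (f t - ε * g t) = s i * f t - ε * (s i * g t)
      ring
    nlinarith
  have hhp : ∀ i : Fin k, 0 < s i * h (x i - δ i) := fun i =>
    hkey i _ (le_trans (hεle i) (min_le_left _ _))
  have hhq : ∀ i : Fin k, 0 < s i * h (x i + δ i) := fun i =>
    hkey i _ (le_trans (hεle i) (min_le_right _ _))
  -- zeros of h near each non-nodal zero via IVT
  have hIVTl : ∀ i : Fin k, ∃ u ∈ Set.Ioo (x i - δ i) (x i), h u = 0 := by
    intro i
    have hle : x i - δ i ≤ x i := by linarith [hδpos i]
    have hsub : Set.Icc (x i - δ i) (x i) ⊆ Set.Icc a b := by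
      intro t ht
      apply hδIcc i
      rw [abs_le]
      exact ⟨by linarith [ht.1], by linarith [ht.2]⟩
    have hc1 : ContinuousOn h (Set.Icc (x i - δ i) (x i)) := hhc.mono hsub
    rcases hs1 i with hs | hs
    · have h1 : 0 < h (x i - δ i) := by have := hhp i; rw [hs] at this; linarith
      have h2 : h (x i) < 0 := by have := hhx i; rw [hs] at this; linarith
      obtain ⟨u, hu, hu0⟩ := intermediate_value_Ioo' hle hc1 (Set.mem_Ioo.mpr ⟨h2, h1⟩)
      exact ⟨u, hu, hu0⟩
    · have h1 : h (x i - δ i) < 0 := by have := hhp i; rw [hs] at this; linarith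
      have h2 : 0 < h (x i) := by have := hhx i; rw [hs] at this; linarith
      obtain ⟨u, hu, hu0⟩ := intermediate_value_Ioo hle hc1 (Set.mem_Ioo.mpr ⟨h1, h2⟩)
      exact ⟨u, hu, hu0⟩
  have hIVTr : ∀ i : Fin k, ∃ u ∈ Set.Ioo (x i) (x i + δ i), h u = 0 := by
    intro i
    have hle : x i ≤ x i + δ i := by linarith [hδpos i]
    have hsub : Set.Icc (x i) (x i + δ i) ⊆ Set.Icc a b := by
      intro t ht
      apply hδIcc i
      rw [abs_le]
      exact ⟨by linarith [ht.1], by linarith [ht.2]⟩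
    have hc1 : ContinuousOn h (Set.Icc (x i) (x i + δ i)) := hhc.mono hsub
    rcases hs1 i with hs | hs
    · have h1 : h (x i) < 0 := by have := hhx i; rw [hs] at this; linarith
      have h2 : 0 < h (x i + δ i) := by have := hhq i; rw [hs] at this; linarith
      obtain ⟨u, hu, hu0⟩ := intermediate_value_Ioo hle hc1 (Set.mem_Ioo.mpr ⟨h1, h2⟩)
      exact ⟨u, hu, hu0⟩
    · have h1 : 0 < h (x i) := by have := hhx i; rw [hs] at this; linarith
      have h2 : h (x i + δ i) < 0 := by have := hhq i; rw [hs] at this; linarith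
      obtain ⟨u, hu, hu0⟩ := intermediate_value_Ioo' hle hc1 (Set.mem_Ioo.mpr ⟨h2, h1⟩)
      exact ⟨u, hu, hu0⟩
  choose u hu hu0 using hIVTl
  choose w hw hw0 using hIVTr
  -- the perturbed coefficient vector
  have hsum : ∀ t, ∑ j, (c - ε • d) j * F j t = h t := by
    intro t
    show (∑ j, (c - ε • d) j * F j t) = (∑ j, c j * F j t) - ε * ∑ j, d j * F j t
    rw [Finset.mul_sum, ← Finset.sum_sub_distrib]
    exact Finset.sum_congr rfl fun j _ => by
      simp only [Pi.sub_apply, Pi.smul_apply, smul_eq_mul]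
      ring
  have hi0 : Fin k := ⟨0, hk⟩
  have hne : c - ε • d ≠ 0 := by
    intro h0
    have h1 := hsum (x hi0)
    rw [h0] at h1
    simp only [Pi.zero_apply, zero_mul, Finset.sum_const_zero] at h1
    have h2 := hhx hi0
    rw [← h1] at h2
    rcases hs1 hi0 with hs | hs <;> rw [hs] at h2 <;> simp at h2 <;> linarith
  have hZh := hT (c - ε • d) hne
  have hset : {t ∈ Set.Icc a b | ∑ j, (c - ε • d) j * F j t = 0}
      = {t ∈ Set.Icc a b | h t = 0} := by
    ext t
    simp only [Set.mem_setOf_eq, hsum t]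
  rw [hset] at hZh
  -- ball facts
  have humem : ∀ i, |u i - x i| < δ i :=
    fun i => by rw [abs_lt]; exact ⟨by linarith [(hu i).1], by linarith [(hu i).2, hδpos i]⟩
  have hwmem : ∀ i, |w i - x i| < δ i :=
    fun i => by rw [abs_lt]; exact ⟨by linarith [(hw i).1, hδpos i], by linarith [(hw i).2]⟩
  have hdisj : ∀ i i' (t : ℝ), i ≠ i' → |t - x i| < δ i → |t - x i'| < δ i' → False := by
    intro i i' t hne' h1 h2
    have h3 := hsep i i' hne'
    have h4 : |x i - x i'| ≤ |x i - t| + |t - x i'| := abs_sub_le _ _ _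
    rw [abs_sub_comm (x i) t] at h4
    have := hδρ i
    have := hδρ i'
    linarith
  have hnoty : ∀ i (t : ℝ), |t - x i| < δ i → ∀ j, t ≠ y j := by
    intro i t ht j hty
    subst hty
    exact hxyne i j (hδZ i _ ht.le (hyZ j)).symm
  -- the big injective family of zeros of h
  set W : Fin k ⊕ Fin k ⊕ Fin l → ℝ := Sum.elim u (Sum.elim w y) with hWdef
  have hWzero : ∀ p, W p ∈ {t ∈ Set.Icc a b | h t = 0} := by
    rintro (i | i | j)
    · exact ⟨hδIcc i _ (humem i).le, hu0 i⟩
    · exact ⟨hδIcc i _ (hwmem i).le, hw0 i⟩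
    · refine ⟨(hy j).1, ?_⟩
      show f (y j) - ε * g (y j) = 0
      rw [(hy j).2.1, hgy j]
      ring
  have hWinj : Function.Injective W := by
    have hxu : ∀ i i', u i = u i' → i = i' := by
      intro i i' he
      by_contra hne'
      exact hdisj i i' (u i) hne' (humem i) (he ▸ humem i')
    have hxw : ∀ i i', w i = w i' → i = i' := by
      intro i i' he
      by_contra hne'
      exact hdisj i i' (w i) hne' (hwmem i) (he ▸ hwmem i')
    have huw : ∀ i i', u i ≠ w i' := by
      intro i i' he
      by_cases hii : i = i'
      · subst hii
        have := (hu i).2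
        have := (hw i).1
        linarith
      · exact hdisj i i' (u i) hii (humem i) (he ▸ hwmem i')
    have hyy : Function.Injective y := fun j j' hjj => by
      have : (Sum.inr j : Fin k ⊕ Fin l) = Sum.inr j' := hdist (by simpa using hjj)
      simpa using this
    rintro (i | i | j) (i' | i' | j') he <;> simp only [hWdef, Sum.elim_inl, Sum.elim_inr] at he
    · rw [hxu i i' he]
    · exact absurd he (huw i i')
    · exact absurd he (hnoty i (u i) (humem i) j')
    · exact absurd he.symm (huw i' i)
    · rw [hxw i i' he]
    · exact absurd he (hnoty i (w i) (hwmem i) j')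
    · exact absurd he.symm (hnoty i' (u i') (humem i') j)
    · exact absurd he.symm (hnoty i' (w i') (hwmem i') j)
    · rw [hyy he]
  have hcount := aux_card_le_of_inj W hWinj hWzero hZh
  simp only [Fintype.card_sum, Fintype.card_fin] at hcount
  omega
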